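/- arXiv:2006.15663 — 4 statements merged into one kernel-verified Lean document; each statement's English description precedes it below -/
import Mathlib

section
/- Let H be a real Hilbert space with orthonormal basis (e_n)_{n≥1}, and let λ_1 ≤ λ_2 ≤ ⋯ be positive reals tending to infinity. Fix γ ≥ 0 and L > 0, and suppose N satisfies (λ_{N+1}^{1+γ} - λ_N^{1+γ})/(λ_{N+1}^γ + λ_N^γ) > L. Let P_N be the orthogonal projection onto span{e_1,…,e_N} and Q_N = Id − P_N. Define α as the balanced constant α = λ_N^{1+γ}λ_{N+1}^γ/(λ_N^γ+λ_{N+1}^γ) + λ_{N+1}^{1+γ}λ_N^γ/(λ_N^γ+λ_{N+1}^γ). Then for every v in the domain of A (where A e_n = λ_n e_n), ((αA^{-γ} − A)P_N v, P_N v) + ((A − αA^{-γ})Q_N v, Q_N v) ≥ ((λ_{N+1}^{1+γ} − λ_N^{1+γ})/(λ_{N+1}^γ + λ_N^γ))·‖v‖_H². -/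
/-- Key quadratic-form estimate under spectral gap conditions (Proposition 3.1):
((αA^{-γ} − A)P_N v, P_N v) + ((A − αA^{-γ})Q_N v, Q_N v) ≥ μ̄ ‖v‖², written in the
coordinates of the orthonormal eigenbasis (e_n), where A e_n = λ_n e_n,
P_N projects onto the first modes (indices n ≤ N) and Q_N onto the rest. -/
theorem stmt5 (l : ℕ → ℝ) (hl : 0 < l 0) (hmono : Monotone l)
    (htop : Filter.Tendsto l Filter.atTop Filter.atTop)
    (γ L : ℝ) (hγ : 0 ≤ γ) (hL : 0 < L) (N : ℕ)
    (hgap : (l (N + 1) ^ (1 + γ) - l N ^ (1 + γ)) / (l (N + 1) ^ γ + l N ^ γ) > L)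
    (α : ℝ)
    (hα : α = l N ^ (1 + γ) * l (N + 1) ^ γ / (l N ^ γ + l (N + 1) ^ γ)
        + l (N + 1) ^ (1 + γ) * l N ^ γ / (l N ^ γ + l (N + 1) ^ γ))
    (v : ℕ → ℝ) (hv : Summable fun n => l n * v n ^ 2) :
    (∑' n, if n ≤ N then (α * l n ^ (-γ) - l n) * v n ^ 2 else 0)
      + (∑' n, if N < n then (l n - α * l n ^ (-γ)) * v n ^ 2 else 0)
      ≥ (l (N + 1) ^ (1 + γ) - l N ^ (1 + γ)) / (l (N + 1) ^ γ + l N ^ γ)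
        * ∑' n, v n ^ 2 := by
  have hlpos : ∀ n, 0 < l n := fun n => lt_of_lt_of_le hl (hmono (Nat.zero_le n))
  have hNpos : 0 < l N := hlpos N
  have hMpos : 0 < l (N + 1) := hlpos (N + 1)
  have hapos : 0 < l N ^ γ := Real.rpow_pos_of_pos hNpos γ
  have hbpos : 0 < l (N + 1) ^ γ := Real.rpow_pos_of_pos hMpos γ
  set μ := (l (N + 1) ^ (1 + γ) - l N ^ (1 + γ)) / (l (N + 1) ^ γ + l N ^ γ) with hμ
  have hμpos : 0 < μ := lt_trans hL hgap
  have hαpos : 0 < α := by rw [hα]; positivity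
  have hN1 : l N ^ (1 + γ) = l N * l N ^ γ := by
    rw [Real.rpow_add hNpos, Real.rpow_one]
  have hM1 : l (N + 1) ^ (1 + γ) = l (N + 1) * l (N + 1) ^ γ := by
    rw [Real.rpow_add hMpos, Real.rpow_one]
  have key1 : α * l N ^ (-γ) - l N = μ := by
    rw [Real.rpow_neg hNpos.le, hμ, hα, hN1, hM1]
    field_simp
    ring
  have key2 : l (N + 1) - α * l (N + 1) ^ (-γ) = μ := by
    rw [Real.rpow_neg hMpos.le, hμ, hα, hN1, hM1]
    field_simp
    ring
  -- antitone of x ↦ x^(-γ)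
  have hanti : ∀ x y : ℝ, 0 < x → x ≤ y → y ^ (-γ) ≤ x ^ (-γ) := by
    intro x y hx hxy
    rw [Real.rpow_neg hx.le, Real.rpow_neg (hx.trans_le hxy).le]
    exact inv_anti₀ (Real.rpow_pos_of_pos hx γ)
      (Real.rpow_le_rpow hx.le hxy hγ)
  -- pointwise bounds on coefficients
  have hc1 : ∀ n, n ≤ N → μ ≤ α * l n ^ (-γ) - l n := by
    intro n hn
    have h1 : l n ≤ l N := hmono hn
    have h2 : l N ^ (-γ) ≤ l n ^ (-γ) := hanti _ _ (hlpos n) h1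
    have := mul_le_mul_of_nonneg_left h2 hαpos.le
    rw [← key1]
    linarith
  have hc2 : ∀ n, N < n → μ ≤ l n - α * l n ^ (-γ) := by
    intro n hn
    have h1 : l (N + 1) ≤ l n := hmono hn
    have h2 : l n ^ (-γ) ≤ l (N + 1) ^ (-γ) := hanti _ _ hMpos h1
    have := mul_le_mul_of_nonneg_left h2 hαpos.le
    rw [← key2]
    linarith
  -- summability
  have hsum_v : Summable (fun n => v n ^ 2) := by
    apply Summable.of_nonneg_of_le (fun n => sq_nonneg _) (fun n => ?_)
      (hv.mul_left (l 0)⁻¹)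
    have h1 : (l n)⁻¹ ≤ (l 0)⁻¹ := inv_anti₀ hl (hmono (Nat.zero_le n))
    have h2 : v n ^ 2 = (l n)⁻¹ * (l n * v n ^ 2) := by
      rw [inv_mul_cancel_left₀ (hlpos n).ne']
    nth_rewrite 1 [h2]
    exact mul_le_mul_of_nonneg_right h1
      (mul_nonneg (hlpos n).le (sq_nonneg _))
  have h1sum : Summable (fun n =>
      if n ≤ N then (α * l n ^ (-γ) - l n) * v n ^ 2 else 0) := by
    apply summable_of_ne_finset_zero (s := Finset.range (N + 1))
    intro n hn
    simp only [Finset.mem_range, not_lt] at hn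
    rw [if_neg (by omega)]
  have h2sum : Summable (fun n =>
      if N < n then (l n - α * l n ^ (-γ)) * v n ^ 2 else 0) := by
    apply Summable.of_nonneg_of_le (fun n => ?_) (fun n => ?_) hv
    · by_cases hn : N < n
      · rw [if_pos hn]
        have := hc2 n hn
        have : 0 ≤ l n - α * l n ^ (-γ) := le_trans hμpos.le this
        exact mul_nonneg this (sq_nonneg _)
      · rw [if_neg hn]
    · by_cases hn : N < n
      · rw [if_pos hn]
        have h3 : 0 ≤ α * l n ^ (-γ) :=
          mul_nonneg hαpos.le (Real.rpow_nonneg (hlpos n).le _)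
        have h4 : l n - α * l n ^ (-γ) ≤ l n := by linarith
        exact mul_le_mul_of_nonneg_right h4 (sq_nonneg _)
      · rw [if_neg hn]
        exact mul_nonneg (hlpos n).le (sq_nonneg _)
  rw [ge_iff_le, ← Summable.tsum_add h1sum h2sum, ← tsum_mul_left]
  apply Summable.tsum_le_tsum _ (hsum_v.mul_left μ) (h1sum.add h2sum)
  intro n
  by_cases hn : n ≤ N
  · rw [if_pos hn, if_neg (by omega)]
    have := mul_le_mul_of_nonneg_right (hc1 n hn) (sq_nonneg (v n))
    linarith
  · rw [if_neg hn, if_pos (by omega)]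
    have := mul_le_mul_of_nonneg_right (hc2 n (by omega)) (sq_nonneg (v n))
    linarith
end

section
/- Under the setting of the truncation function W(u) = Σ_n C_* λ_n^{-s/2} φ(λ_n^{s/2}(u,e_n)/C_*) e_n, suppose s_0 > 0 satisfies Σ_n λ_n^{s_0 - s} < ∞. Then W is bounded from H to H^{s_0}: there is a constant M with ‖W(u)‖_{H^{s_0}} ≤ M for all u ∈ H; moreover W: H → H^{s_0} is continuous. -/
open scoped RealInnerProductSpace

private lemma stmt7_key (s s₀ Cs x t : ℝ) (hx : 0 < x) :
    x ^ s₀ * (Cs * x ^ (-(s / 2)) * t) ^ 2 = Cs ^ 2 * t ^ 2 * x ^ (s₀ - s) := by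
  have h1 : (x ^ (-(s / 2))) ^ 2 = x ^ (-s) := by
    rw [sq, ← Real.rpow_add hx]; congr 1; ring
  have h2 : x ^ s₀ * x ^ (-s) = x ^ (s₀ - s) := by
    rw [← Real.rpow_add hx, sub_eq_add_neg]
  rw [mul_pow, mul_pow, h1, ← h2]; ring

private lemma stmt7_bnd (C x a b : ℝ) (hx : 0 ≤ x) (ha : a ^ 2 ≤ b) :
    C ^ 2 * a ^ 2 * x ≤ b * C ^ 2 * x := by
  have h : C ^ 2 * a ^ 2 ≤ b * C ^ 2 := by
    nlinarith [mul_nonneg (sq_nonneg C) (sub_nonneg.mpr ha)]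
  exact mul_le_mul_of_nonneg_right h hx

/-- Statement 1 of Proposition 4.1: if Σ_n λ_n^{s_0-s} < ∞ then the truncation map
W(u) = Σ_n C_* λ_n^{-s/2} φ(λ_n^{s/2}(u,e_n)/C_*) e_n is bounded from H to H^{s_0}
(‖W(u)‖_{H^{s_0}} ≤ M uniformly) and continuous from H to H^{s_0}; both properties are
expressed via the H^{s_0}-norm Σ_n λ_n^{s_0}·(coefficient)². -/
theorem stmt7 {H : Type*} [NormedAddCommGroup H] [InnerProductSpace ℝ H] [CompleteSpace H]
    (e : HilbertBasis ℕ ℝ H) (l : ℕ → ℝ) (hl : 0 < l 0) (hmono : Monotone l)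
    (φ : ℝ → ℝ) (hφc : Continuous φ) (hφb : ∀ z : ℝ, |φ z| ≤ 2)
    (hφ1 : ∀ z : ℝ, |z| ≤ 1 → φ z = z) (hφ2 : ∀ z : ℝ, 2 ≤ |z| → φ z = 2)
    (Cs s s₀ : ℝ) (hCs : 0 < Cs) (hs₀ : 0 < s₀) (hs : s₀ < s)
    (hsum : Summable fun n => l n ^ (s₀ - s)) :
    (∃ M : ℝ, ∀ u : H,
        (∑' n, l n ^ s₀ * (Cs * l n ^ (-(s / 2)) * φ (l n ^ (s / 2) * ⟪u, e n⟫ / Cs)) ^ 2)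
          ≤ M ^ 2)
    ∧ ∀ u : H, ∀ ε > (0:ℝ), ∃ δ > (0:ℝ), ∀ v : H, ‖v - u‖ < δ →
        (∑' n, l n ^ s₀ *
            (Cs * l n ^ (-(s / 2)) * φ (l n ^ (s / 2) * ⟪v, e n⟫ / Cs)
              - Cs * l n ^ (-(s / 2)) * φ (l n ^ (s / 2) * ⟪u, e n⟫ / Cs)) ^ 2)
          < ε ^ 2 := by
  have lpos : ∀ n, 0 < l n := fun n => lt_of_lt_of_le hl (hmono (Nat.zero_le n))
  constructor
  · -- boundedness
    refine ⟨Real.sqrt (∑' n, 4 * Cs ^ 2 * l n ^ (s₀ - s)), fun u => ?_⟩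
    have hg : Summable fun n => 4 * Cs ^ 2 * l n ^ (s₀ - s) := hsum.mul_left _
    have hle : ∀ n, l n ^ s₀ * (Cs * l n ^ (-(s / 2)) * φ (l n ^ (s / 2) * ⟪u, e n⟫ / Cs)) ^ 2
        ≤ 4 * Cs ^ 2 * l n ^ (s₀ - s) := by
      intro n
      rw [stmt7_key s s₀ Cs (l n) _ (lpos n)]
      obtain ⟨h1, h2⟩ := abs_le.mp (hφb (l n ^ (s / 2) * ⟪u, e n⟫ / Cs))
      have hx : (0:ℝ) ≤ l n ^ (s₀ - s) := Real.rpow_nonneg (lpos n).le _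
      exact stmt7_bnd Cs _ _ 4 hx (by nlinarith)
    have hnn : ∀ n, 0 ≤ l n ^ s₀ *
        (Cs * l n ^ (-(s / 2)) * φ (l n ^ (s / 2) * ⟪u, e n⟫ / Cs)) ^ 2 :=
      fun n => mul_nonneg (Real.rpow_nonneg (lpos n).le _) (sq_nonneg _)
    have hfs : Summable fun n => l n ^ s₀ *
        (Cs * l n ^ (-(s / 2)) * φ (l n ^ (s / 2) * ⟪u, e n⟫ / Cs)) ^ 2 :=
      Summable.of_nonneg_of_le hnn hle hg
    have hgnn : 0 ≤ ∑' n, 4 * Cs ^ 2 * l n ^ (s₀ - s) :=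
      tsum_nonneg fun n => mul_nonneg (by positivity) (Real.rpow_nonneg (lpos n).le _)
    calc (∑' n, l n ^ s₀ * (Cs * l n ^ (-(s / 2)) * φ (l n ^ (s / 2) * ⟪u, e n⟫ / Cs)) ^ 2)
        ≤ ∑' n, 4 * Cs ^ 2 * l n ^ (s₀ - s) := Summable.tsum_le_tsum hle hfs hg
      _ = Real.sqrt (∑' n, 4 * Cs ^ 2 * l n ^ (s₀ - s)) ^ 2 := (Real.sq_sqrt hgnn).symm
  · -- continuity
    intro u ε hε
    set D : H → ℕ → ℝ := fun v n => l n ^ s₀ *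
        (Cs * l n ^ (-(s / 2)) * φ (l n ^ (s / 2) * ⟪v, e n⟫ / Cs)
          - Cs * l n ^ (-(s / 2)) * φ (l n ^ (s / 2) * ⟪u, e n⟫ / Cs)) ^ 2 with hD
    have hDle : ∀ v n, D v n ≤ 16 * Cs ^ 2 * l n ^ (s₀ - s) := by
      intro v n
      have heq : D v n = Cs ^ 2 *
          (φ (l n ^ (s / 2) * ⟪v, e n⟫ / Cs) - φ (l n ^ (s / 2) * ⟪u, e n⟫ / Cs)) ^ 2
          * l n ^ (s₀ - s) := by
        simp only [hD]
        rw [← mul_sub]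
        exact stmt7_key s s₀ Cs (l n) _ (lpos n)
      rw [heq]
      obtain ⟨ha1, ha2⟩ := abs_le.mp (hφb (l n ^ (s / 2) * ⟪v, e n⟫ / Cs))
      obtain ⟨hb1, hb2⟩ := abs_le.mp (hφb (l n ^ (s / 2) * ⟪u, e n⟫ / Cs))
      have hx : (0:ℝ) ≤ l n ^ (s₀ - s) := Real.rpow_nonneg (lpos n).le _
      exact stmt7_bnd Cs _ _ 16 hx (by nlinarith)
    have hDnn : ∀ v n, 0 ≤ D v n := by
      intro v n
      simp only [hD]
      exact mul_nonneg (Real.rpow_nonneg (lpos n).le _) (sq_nonneg _)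
    have hDs : ∀ v, Summable (D v) := fun v =>
      Summable.of_nonneg_of_le (hDnn v) (hDle v) (hsum.mul_left _)
    have hc : (0:ℝ) < 16 * Cs ^ 2 := by positivity
    have hε2 : (0:ℝ) < ε ^ 2 / 2 := by positivity
    set η : ℝ := ε ^ 2 / 2 / (16 * Cs ^ 2) with hη
    have hηpos : 0 < η := by positivity
    -- choose N with small tail
    have htend := hsum.hasSum.tendsto_sum_nat
    rw [Metric.tendsto_atTop] at htend
    obtain ⟨N, hN⟩ := htend η hηpos
    have hNN := hN N le_rfl
    rw [Real.dist_eq] at hNN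
    obtain ⟨h1, h2⟩ := abs_lt.mp hNN
    have hcompl := Summable.sum_add_tsum_compl (s := Finset.range N) hsum
    have htail_lt : (∑' (i : ((Finset.range N : Set ℕ)ᶜ : Set ℕ)), l (i : ℕ) ^ (s₀ - s)) < η := by
      linarith
    -- continuity of the finite part
    have hFcont : Continuous (fun v : H => ∑ n ∈ Finset.range N, D v n) := by
      apply continuous_finset_sum
      intro n _
      simp only [hD]
      have hinner : Continuous fun v : H => ⟪v, e n⟫ := continuous_id.inner continuous_const
      exact continuous_const.mul
        (((continuous_const.mul
          (hφc.comp ((continuous_const.mul hinner).div_const Cs))).sub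
            continuous_const).pow 2)
    have hF0 : ∑ n ∈ Finset.range N, D u n = 0 := by
      apply Finset.sum_eq_zero
      intro n _
      simp [hD]
    obtain ⟨δ, hδpos, hδ⟩ := Metric.continuous_iff.mp hFcont u (ε ^ 2 / 2) hε2
    refine ⟨δ, hδpos, fun v hv => ?_⟩
    have hFv := hδ v (by rwa [dist_eq_norm])
    rw [Real.dist_eq, hF0, sub_zero] at hFv
    have hFv' : ∑ n ∈ Finset.range N, D v n < ε ^ 2 / 2 := (abs_lt.mp hFv).2
    have hsplit := Summable.sum_add_tsum_compl (s := Finset.range N) (hDs v)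
    have hDtail : (∑' (i : ((Finset.range N : Set ℕ)ᶜ : Set ℕ)), D v (i : ℕ))
        ≤ ∑' (i : ((Finset.range N : Set ℕ)ᶜ : Set ℕ)), 16 * Cs ^ 2 * l (i : ℕ) ^ (s₀ - s) :=
      Summable.tsum_le_tsum (fun i => hDle v i) ((hDs v).subtype _) ((hsum.mul_left _).subtype _)
    have hmul : (∑' (i : ((Finset.range N : Set ℕ)ᶜ : Set ℕ)), 16 * Cs ^ 2 * l (i : ℕ) ^ (s₀ - s))
        = 16 * Cs ^ 2 * ∑' (i : ((Finset.range N : Set ℕ)ᶜ : Set ℕ)), l (i : ℕ) ^ (s₀ - s) :=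
      tsum_mul_left
    have hηeq : 16 * Cs ^ 2 * η = ε ^ 2 / 2 := by
      rw [hη]; field_simp
    show (∑' n, D v n) < ε ^ 2
    have htail_bound : (∑' (i : ((Finset.range N : Set ℕ)ᶜ : Set ℕ)), D v (i : ℕ)) < ε ^ 2 / 2 := by
      calc (∑' (i : ((Finset.range N : Set ℕ)ᶜ : Set ℕ)), D v (i : ℕ))
          ≤ _ := hDtail
        _ = 16 * Cs ^ 2 * ∑' (i : ((Finset.range N : Set ℕ)ᶜ : Set ℕ)), l (i : ℕ) ^ (s₀ - s) := hmul
        _ < 16 * Cs ^ 2 * η := by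
            exact (mul_lt_mul_iff_right₀ hc).mpr htail_lt
        _ = ε ^ 2 / 2 := hηeq
    linarith [hsplit]
end

section
/- For every k > 0 and r > 0, there exist infinitely many N ∈ ℕ such that the set (𝒞^k_N − 𝒞^k_N) ∩ 𝓑_r = {0}, where 𝒞^k_N := {l ∈ ℤ³ : N − k ≤ |l|² ≤ N + k} and 𝓑_r := {l ∈ ℤ³ : |l| ≤ r}. -/
open scoped Pointwise

/-- The squared Euclidean norm of a triple of integers. -/
def sqNorm (l : ℤ × ℤ × ℤ) : ℤ := l.1 ^ 2 + l.2.1 ^ 2 + l.2.2 ^ 2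

/-- The annulus 𝒞^k_N = {l ∈ ℤ³ : N − k ≤ |l|² ≤ N + k}. -/
def annulus (k : ℝ) (N : ℕ) : Set (ℤ × ℤ × ℤ) :=
  {l | (N : ℝ) - k ≤ (sqNorm l : ℝ) ∧ (sqNorm l : ℝ) ≤ (N : ℝ) + k}

/-- The ball 𝓑_r = {l ∈ ℤ³ : |l| ≤ r}. -/
def ball3 (r : ℝ) : Set (ℤ × ℤ × ℤ) := {l | (sqNorm l : ℝ) ≤ r ^ 2}

/- ## Auxiliary development -/

/-- Dot product on `ℤ³`. -/
def dot3 (u v : ℤ × ℤ × ℤ) : ℤ := u.1 * v.1 + u.2.1 * v.2.1 + u.2.2 * v.2.2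

/-- Cross product on `ℤ³`. -/
def cross3 (u v : ℤ × ℤ × ℤ) : ℤ × ℤ × ℤ :=
  (u.2.1 * v.2.2 - u.2.2 * v.2.1, u.2.2 * v.1 - u.1 * v.2.2, u.1 * v.2.1 - u.2.1 * v.1)

lemma dot3_cross3 (u w : ℤ × ℤ × ℤ) : dot3 (cross3 u w) u = 0 := by
  obtain ⟨u1, u2, u3⟩ := u; obtain ⟨w1, w2, w3⟩ := w
  simp only [dot3, cross3]; ring

lemma sqNorm_cross3 (u w : ℤ × ℤ × ℤ) :
    sqNorm (cross3 u w) = sqNorm u * sqNorm w - (dot3 u w) ^ 2 := by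
  obtain ⟨u1, u2, u3⟩ := u; obtain ⟨w1, w2, w3⟩ := w
  simp only [dot3, cross3, sqNorm]; ring

lemma sqNorm_add3 (u w : ℤ × ℤ × ℤ) :
    sqNorm (u + w) = sqNorm u + 2 * dot3 u w + sqNorm w := by
  obtain ⟨u1, u2, u3⟩ := u; obtain ⟨w1, w2, w3⟩ := w
  simp only [dot3, sqNorm, Prod.mk_add_mk]; ring

lemma sqNorm_nonneg3 (u : ℤ × ℤ × ℤ) : 0 ≤ sqNorm u := by
  obtain ⟨u1, u2, u3⟩ := u; simp only [sqNorm]; positivity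

lemma sqNorm_pos3 {u : ℤ × ℤ × ℤ} (hu : u ≠ 0) : 1 ≤ sqNorm u := by
  obtain ⟨u1, u2, u3⟩ := u
  have h : u1 ≠ 0 ∨ u2 ≠ 0 ∨ u3 ≠ 0 := by
    by_contra h; push_neg at h
    exact hu (by simp [Prod.ext_iff, h.1, h.2.1, h.2.2])
  simp only [sqNorm]
  rcases h with h | h | h
  · nlinarith [Int.one_le_abs h, sq_abs u1, sq_nonneg u2, sq_nonneg u3]
  · nlinarith [Int.one_le_abs h, sq_abs u2, sq_nonneg u1, sq_nonneg u3]
  · nlinarith [Int.one_le_abs h, sq_abs u3, sq_nonneg u1, sq_nonneg u2]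

/-- Key algebraic fact over a field: if `a ⊥ d` and `a` is isotropic nonzero,
then `-(|d|²)` is a square. (case `a1 ≠ 0`) -/
lemma key_field_aux {F : Type*} [Field F] (a1 a2 a3 d1 d2 d3 : F)
    (ha : a1 ≠ 0) (h0 : a1 * d1 + a2 * d2 + a3 * d3 = 0)
    (h1 : a1 ^ 2 + a2 ^ 2 + a3 ^ 2 = 0) :
    ∃ lam : F, lam ^ 2 = -(d1 ^ 2 + d2 ^ 2 + d3 ^ 2) := by
  refine ⟨(a2 * d3 - a3 * d2) * a1⁻¹, ?_⟩
  have key : (a2 * d3 - a3 * d2) ^ 2 = -(d1 ^ 2 + d2 ^ 2 + d3 ^ 2) * a1 ^ 2 := by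
    linear_combination (2 * a1 * d1 - (a1 * d1 + a2 * d2 + a3 * d3)) * h0 +
      (d2 ^ 2 + d3 ^ 2) * h1
  field_simp
  linear_combination key

lemma key_field {F : Type*} [Field F] (a1 a2 a3 d1 d2 d3 : F)
    (hne : ¬(a1 = 0 ∧ a2 = 0 ∧ a3 = 0)) (h0 : a1 * d1 + a2 * d2 + a3 * d3 = 0)
    (h1 : a1 ^ 2 + a2 ^ 2 + a3 ^ 2 = 0) :
    ∃ lam : F, lam ^ 2 = -(d1 ^ 2 + d2 ^ 2 + d3 ^ 2) := by
  by_cases ha1 : a1 ≠ 0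
  · exact key_field_aux a1 a2 a3 d1 d2 d3 ha1 h0 h1
  by_cases ha2 : a2 ≠ 0
  · obtain ⟨l, hl⟩ := key_field_aux a2 a3 a1 d2 d3 d1 ha2
      (by linear_combination h0) (by linear_combination h1)
    exact ⟨l, by linear_combination hl⟩
  by_cases ha3 : a3 ≠ 0
  · obtain ⟨l, hl⟩ := key_field_aux a3 a1 a2 d3 d1 d2 ha3
      (by linear_combination h0) (by linear_combination h1)
    exact ⟨l, by linear_combination hl⟩
  · push_neg at ha1 ha2 ha3
    exact absurd ⟨by tauto, by tauto, by tauto⟩ hne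

/-- Lemma A: if `v ⊥ d` and `q ‖ |v|²` exactly, then `-(|d|²)` is a square mod `q`. -/
lemma lemA {q : ℕ} (hq : q.Prime) (v d : ℤ × ℤ × ℤ) (hvd : dot3 v d = 0)
    (h1 : (q : ℤ) ∣ sqNorm v) (h2 : ¬ ((q : ℤ) ^ 2 ∣ sqNorm v)) :
    IsSquare (-((sqNorm d : ℤ) : ZMod q)) := by
  haveI := Fact.mk hq
  obtain ⟨v1, v2, v3⟩ := v; obtain ⟨d1, d2, d3⟩ := d
  simp only [sqNorm, dot3] at hvd h1 h2 ⊢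
  have hnot : ¬ ((q : ℤ) ∣ v1 ∧ (q : ℤ) ∣ v2 ∧ (q : ℤ) ∣ v3) := by
    rintro ⟨⟨c1, rfl⟩, ⟨c2, rfl⟩, ⟨c3, rfl⟩⟩
    exact h2 ⟨c1 ^ 2 + c2 ^ 2 + c3 ^ 2, by ring⟩
  have hne : ¬ ((v1 : ZMod q) = 0 ∧ (v2 : ZMod q) = 0 ∧ (v3 : ZMod q) = 0) := by
    rintro ⟨e1, e2, e3⟩
    exact hnot ⟨(ZMod.intCast_zmod_eq_zero_iff_dvd _ _).mp e1,
      (ZMod.intCast_zmod_eq_zero_iff_dvd _ _).mp e2,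
      (ZMod.intCast_zmod_eq_zero_iff_dvd _ _).mp e3⟩
  have h0 : (v1 : ZMod q) * (d1 : ZMod q) + (v2 : ZMod q) * (d2 : ZMod q)
      + (v3 : ZMod q) * (d3 : ZMod q) = 0 := by
    have := congrArg (fun t : ℤ => (t : ZMod q)) hvd
    push_cast at this
    linear_combination this
  have h1' : (v1 : ZMod q) ^ 2 + (v2 : ZMod q) ^ 2 + (v3 : ZMod q) ^ 2 = 0 := by
    obtain ⟨t, ht⟩ := h1
    have := congrArg (fun s : ℤ => (s : ZMod q)) ht
    push_cast at this
    rw [this, ZMod.natCast_self, zero_mul]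
  obtain ⟨lam, hl⟩ := key_field (v1 : ZMod q) v2 v3 d1 d2 d3 hne h0 h1'
  refine ⟨lam, ?_⟩
  have : ((d1 ^ 2 + d2 ^ 2 + d3 ^ 2 : ℤ) : ZMod q)
      = (d1 : ZMod q) ^ 2 + (d2 : ZMod q) ^ 2 + (d3 : ZMod q) ^ 2 := by push_cast; ring
  rw [this, ← hl, sq]

/-- Integer CRT. -/
lemma crt_int {M n : ℕ} (h : Nat.Coprime M n) (a b : ℤ) :
    ∃ c : ℤ, c ≡ a [ZMOD (M : ℤ)] ∧ c ≡ b [ZMOD (n : ℤ)] := by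
  obtain ⟨u, v, huv⟩ := Nat.isCoprime_iff_coprime.mpr h
  refine ⟨a * (v * n) + b * (u * M), ?_, ?_⟩
  · refine (Int.modEq_iff_dvd.mpr ⟨(b - a) * u, ?_⟩).symm
    linear_combination a * huv
  · refine (Int.modEq_iff_dvd.mpr ⟨(a - b) * v, ?_⟩).symm
    linear_combination b * huv

/-- Lemma B auxiliary: lifting a sum of two squares mod `q` to mod `q²` when one
term is a unit. -/
lemma lemB_aux {q : ℕ} (hq : q.Prime) (hodd : q % 2 = 1) (u : ℤ) (xb yb : ZMod q)
    (hxy : xb ^ 2 + yb ^ 2 = (u : ZMod q)) (hxb : xb ≠ 0) :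
    ∃ x y : ℤ, x ^ 2 + y ^ 2 ≡ u [ZMOD ((q : ℤ) ^ 2)] := by
  haveI := Fact.mk hq
  set x0 : ℤ := (xb.val : ℤ) with hx0
  set y0 : ℤ := (yb.val : ℤ) with hy0
  have hcastx : ((x0 : ℤ) : ZMod q) = xb := by
    rw [hx0]; exact_mod_cast ZMod.natCast_rightInverse xb
  have hcasty : ((y0 : ℤ) : ZMod q) = yb := by
    rw [hy0]; exact_mod_cast ZMod.natCast_rightInverse yb
  have hdvd : (q : ℤ) ∣ (u - x0 ^ 2 - y0 ^ 2) := by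
    rw [← ZMod.intCast_zmod_eq_zero_iff_dvd]
    push_cast
    rw [hcastx, hcasty, ← hxy]
    ring
  obtain ⟨s, hs⟩ := hdvd
  -- Bezout for (q, 2 * x0)
  have hqx : ¬ q ∣ 2 * xb.val := by
    intro hd
    rcases (Nat.Prime.dvd_mul hq).mp hd with h2 | hx
    · have h2' := Nat.le_of_dvd (by norm_num) h2
      have := hq.two_le
      omega
    · have hlt : xb.val < q := ZMod.val_lt xb
      have hz0 : xb.val = 0 := Nat.eq_zero_of_dvd_of_lt hx hlt
      exact hxb (by rwa [← ZMod.val_eq_zero])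
  have hco : IsCoprime (q : ℤ) ((2 * xb.val : ℕ) : ℤ) :=
    Nat.isCoprime_iff_coprime.mpr (hq.coprime_iff_not_dvd.mpr hqx)
  obtain ⟨A, B, hAB⟩ := hco
  set t : ℤ := B * s with ht
  refine ⟨x0 + q * t, y0, ?_⟩
  have key : (x0 + q * t) ^ 2 + y0 ^ 2 - u = (q : ℤ) ^ 2 * (t ^ 2 - A * s) := by
    have h2x : (((2 * xb.val : ℕ) : ℤ)) = 2 * x0 := by push_cast [hx0]; ring
    rw [h2x] at hAB
    calc (x0 + q * t) ^ 2 + y0 ^ 2 - u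
        = -(u - x0 ^ 2 - y0 ^ 2) + 2 * x0 * q * (B * s) + q ^ 2 * t ^ 2 := by rw [← ht]; ring
      _ = -(q * s) + (1 - A * q) * q * s + q ^ 2 * t ^ 2 := by
          rw [hs]; ring_nf; linear_combination (q * s) * hAB
      _ = (q : ℤ) ^ 2 * (t ^ 2 - A * s) := by ring
  exact Int.modEq_iff_dvd.mpr ⟨-(t ^ 2 - A * s), by linear_combination -key⟩

/-- Lemma B: every integer is a sum of three squares mod `q²` for odd prime `q`. -/
lemma lemB {q : ℕ} (hq : q.Prime) (hodd : q % 2 = 1) (a : ℤ) :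
    ∃ x y z : ℤ, x ^ 2 + y ^ 2 + z ^ 2 ≡ a [ZMOD ((q : ℤ) ^ 2)] := by
  haveI := Fact.mk hq
  have hq1 : 1 < q := hq.one_lt
  obtain ⟨z, hz⟩ : ∃ z : ℤ, ¬ (q : ℤ) ∣ (a - z ^ 2) := by
    by_cases h : (q : ℤ) ∣ a
    · refine ⟨1, fun hd => ?_⟩
      have h1 : (q : ℤ) ∣ 1 := by
        have := dvd_sub h hd; simpa using this
      have := Int.le_of_dvd one_pos h1
      omega
    · exact ⟨0, by simpa using h⟩
  obtain ⟨xb, yb, hxy⟩ := ZMod.sq_add_sq q ((a - z ^ 2 : ℤ) : ZMod q)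
  have hone : xb ≠ 0 ∨ yb ≠ 0 := by
    by_contra h
    push_neg at h
    rw [h.1, h.2] at hxy
    have : ((a - z ^ 2 : ℤ) : ZMod q) = 0 := by rw [← hxy]; ring
    exact hz ((ZMod.intCast_zmod_eq_zero_iff_dvd _ _).mp this)
  rcases hone with hxb | hyb
  · obtain ⟨x, y, hmod⟩ := lemB_aux hq hodd (a - z ^ 2) xb yb hxy hxb
    refine ⟨x, y, z, ?_⟩
    have := hmod.add_right (z ^ 2)
    simpa using this
  · obtain ⟨x, y, hmod⟩ := lemB_aux hq hodd (a - z ^ 2) yb xb (by rw [← hxy]; ring) hyb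
    refine ⟨y, x, z, ?_⟩
    have h4 := hmod.add_right (z ^ 2)
    calc y ^ 2 + x ^ 2 + z ^ 2 = x ^ 2 + y ^ 2 + z ^ 2 := by ring
      _ ≡ a [ZMOD ((q : ℤ) ^ 2)] := by simpa using h4

/-- Lemma C: for every `m ≥ 1` and bound `B`, there is a prime `q > B` with
`q ≡ 7 (mod 8)` such that `-m` is a non-square mod `q`. -/
lemma lemC (m : ℕ) (hm : 1 ≤ m) (B : ℕ) :
    ∃ q : ℕ, q.Prime ∧ B < q ∧ q % 8 = 7 ∧ ¬ IsSquare ((-(m : ℤ) : ℤ) : ZMod q) := by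
  haveI : NeZero (8 * m) := ⟨by positivity⟩
  have hunit : IsUnit (-1 : ZMod (8 * m)) := IsUnit.neg isUnit_one
  obtain ⟨q, hqB, hq, hmod⟩ := Nat.forall_exists_prime_gt_and_eq_mod hunit B
  have hdvd : (8 * m) ∣ (q + 1) := by
    have hz : ((q + 1 : ℕ) : ZMod (8 * m)) = 0 := by push_cast [hmod]; ring
    exact (ZMod.natCast_eq_zero_iff _ _).mp hz
  obtain ⟨T, hT⟩ := hdvd
  have hq8 : q % 8 = 7 := by
    have h2 : q + 1 = 8 * (m * T) := by rw [hT]; ring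
    set mt := m * T
    omega
  have hq4 : q % 4 = 3 := by omega
  have hqodd : Odd q := Nat.odd_iff.mpr (by omega)
  haveI := Fact.mk hq
  -- 2-adic decomposition of m
  set α := m.factorization 2 with hα
  set w := m / 2 ^ α with hwdef
  have hm0 : m ≠ 0 := by omega
  have hwm : 2 ^ α * w = m := Nat.ordProj_mul_ordCompl_eq_self m 2
  have hw2 : ¬ 2 ∣ w := Nat.not_dvd_ordCompl Nat.prime_two hm0
  have hwodd : Odd w := Nat.odd_iff.mpr (Nat.two_dvd_ne_zero.mp hw2)
  have hwdvdm : w ∣ m := Dvd.intro_left (2 ^ α) hwm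
  have hwdvd : w ∣ q + 1 := hwdvdm.trans ((dvd_mul_left m 8).trans ⟨T, hT⟩)
  -- J(q | w) = χ₄ w
  have hqw : ((q : ℤ)) ≡ (-1 : ℤ) [ZMOD (w : ℤ)] := by
    obtain ⟨tW, htW⟩ := hwdvd
    refine (Int.modEq_iff_dvd.mpr ⟨-tW, ?_⟩)
    have : (q : ℤ) + 1 = (w : ℤ) * tW := by exact_mod_cast htW
    linarith
  have hJqw : jacobiSym (q : ℤ) w = ZMod.χ₄ w := by
    rw [jacobiSym.mod_left' hqw]
    exact jacobiSym.at_neg_one hwodd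
  have hw4 : w % 4 = 1 ∨ w % 4 = 3 := by
    have := Nat.odd_iff.mp hwodd
    omega
  have hJwq : jacobiSym ((w : ℕ) : ℤ) q = 1 := by
    rw [jacobiSym.quadratic_reciprocity hwodd hqodd, hJqw]
    rcases hw4 with h | h
    · have hchi : ZMod.χ₄ (w : ℕ) = 1 := by
        rw [ZMod.χ₄_nat_eq_if_mod_four]
        simp [Nat.odd_iff.mp hwodd, h]
      have heven : Even (w / 2 * (q / 2)) := by
        refine Even.mul_right (Nat.even_iff.mpr ?_) _
        omega
      rw [hchi, heven.neg_one_pow, one_mul]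
    · have hchi : ZMod.χ₄ (w : ℕ) = -1 := by
        rw [ZMod.χ₄_nat_eq_if_mod_four]
        have h2 : ¬ (w % 2 = 0) := by omega
        have h1 : ¬ (w % 4 = 1) := by omega
        simp [h2, h1]
      have hodd' : Odd (w / 2 * (q / 2)) := by
        refine Odd.mul ?_ ?_ <;> · rw [Nat.odd_iff]; omega
      rw [hchi, hodd'.neg_one_pow]
      ring
  have hJm : jacobiSym ((m : ℕ) : ℤ) q = 1 := by
    have hcast : ((m : ℕ) : ℤ) = (2 : ℤ) ^ α * ((w : ℕ) : ℤ) := by exact_mod_cast hwm.symm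
    rw [hcast, jacobiSym.mul_left, jacobiSym.pow_left, jacobiSym.at_two hqodd]
    have hchi8 : ZMod.χ₈ (q : ℕ) = 1 := by
      rw [ZMod.χ₈_nat_eq_if_mod_eight]
      simp [show ¬ (q % 2 = 0) by omega, hq8]
    rw [hchi8, one_pow, one_mul, hJwq]
  have hJ : jacobiSym (-(m : ℤ)) q = -1 := by
    rw [show (-(m : ℤ)) = -1 * (m : ℤ) by ring, jacobiSym.mul_left,
      jacobiSym.at_neg_one hqodd, hJm, mul_one]
    rw [ZMod.χ₄_nat_eq_if_mod_four]
    simp [show ¬ (q % 2 = 0) by omega, show ¬ (q % 4 = 1) by omega]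
  have hns : ¬ IsSquare ((-(m : ℤ) : ℤ) : ZMod q) := by
    refine (legendreSym.eq_neg_one_iff q).mp ?_
    rw [jacobiSym.legendreSym.to_jacobiSym]
    exact hJ
  exact ⟨q, hq, hqB, hq8, hns⟩

/-- The finite list of relevant triples `(m, j, p)`. -/
def mkL (R K P : ℕ) : List (ℕ × ℤ × ℤ) :=
  (List.range R).flatMap fun i =>
    (List.range (2 * K + 1)).flatMap fun a =>
      (List.range (2 * P + 1)).map fun b => (i + 1, ((a : ℤ) - K, (b : ℤ) - P))

lemma mem_mkL {R K P : ℕ} {m : ℕ} {j p : ℤ} (h1 : 1 ≤ m) (h2 : m ≤ R)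
    (h3 : |j| ≤ (K : ℤ)) (h4 : |p| ≤ (P : ℤ)) : (m, j, p) ∈ mkL R K P := by
  have h3' := abs_le.mp h3
  have h4' := abs_le.mp h4
  have hm1 : m - 1 < R := by omega
  have hj1 : (j + K).toNat < 2 * K + 1 := by omega
  have hp1 : (p + P).toNat < 2 * P + 1 := by omega
  simp only [mkL, List.mem_flatMap, List.mem_map, List.mem_range]
  refine ⟨m - 1, hm1, (j + K).toNat, (by simp only [bind_pure_comp, List.map_eq_map, List.mem_map, List.mem_range]; exact ⟨_, hj1, rfl⟩), ((p + P).toNat : ℤ), ?_, ?_⟩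
  · simp only [bind_pure_comp, List.map_eq_map, List.mem_map, List.mem_range]
    exact ⟨(p + P).toNat, hp1, rfl⟩
  · simp only [Prod.mk.injEq]
    refine ⟨by omega, by omega, by omega⟩

lemma mkL_pos {R K P : ℕ} : ∀ t ∈ mkL R K P, 1 ≤ t.1 := by
  intro t ht
  simp only [mkL, List.mem_flatMap, List.mem_map, List.mem_range] at ht
  obtain ⟨i, _, a, _, b, _, rfl⟩ := ht
  simp

/-- Lemma D: the main CRT construction over a list of triples. -/
lemma lemD (L : List (ℕ × ℤ × ℤ)) (hL : ∀ t ∈ L, 1 ≤ t.1) :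
    ∃ (M : ℕ) (c x y z : ℤ), 0 < M ∧ (x ^ 2 + y ^ 2 + z ^ 2) ≡ c [ZMOD (M : ℤ)] ∧
      ∀ t ∈ L, ∀ N : ℤ, N ≡ c [ZMOD (M : ℤ)] → ∀ v d : ℤ × ℤ × ℤ, dot3 v d = 0 →
        sqNorm d = (t.1 : ℤ) → sqNorm v ≠ (t.1 : ℤ) * (N + t.2.1) - t.2.2 ^ 2 := by
  induction L with
  | nil => exact ⟨1, 0, 0, 0, 0, one_pos, by simp [Int.ModEq], by simp⟩
  | cons t L ih =>
    obtain ⟨M, c, x, y, z, hM, hxyz, H⟩ := ih fun t' ht' => hL t' (List.mem_cons_of_mem _ ht')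
    obtain ⟨m, j, p⟩ := t
    have hm : 1 ≤ m := hL _ List.mem_cons_self
    obtain ⟨q, hq, hqM, hq8, hnsq⟩ := lemC m hm M
    have hq2 : 2 ≤ q := hq.two_le
    have hqodd : q % 2 = 1 := by omega
    -- q does not divide m
    have hqm : ¬ q ∣ m := by
      intro hd
      apply hnsq
      have : ((-(m : ℤ) : ℤ) : ZMod q) = 0 := by
        rw [ZMod.intCast_zmod_eq_zero_iff_dvd]
        exact Dvd.dvd.neg_right (by exact_mod_cast hd)
      rw [this]
      exact ⟨0, by ring⟩
    -- coprimality facts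
    have hcopMq : Nat.Coprime M (q ^ 2) :=
      Nat.Coprime.pow_right 2 ((hq.coprime_iff_not_dvd.mpr
        (fun hdvd => absurd (Nat.le_of_dvd hM hdvd) (by omega))).symm)
    have hcopmq : Nat.Coprime m (q ^ 2) :=
      Nat.Coprime.pow_right 2 ((hq.coprime_iff_not_dvd.mpr hqm).symm)
    -- inverse of m mod q²
    obtain ⟨U, V, hUV⟩ := Nat.isCoprime_iff_coprime.mpr hcopmq
    have hUV' : U * (m : ℤ) + V * ((q : ℤ) ^ 2) = 1 := by push_cast at hUV; linarith
    set e : ℤ := (p ^ 2 + q) * U with he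
    have hme : (m : ℤ) * e ≡ (p ^ 2 + q) [ZMOD ((q : ℤ) ^ 2)] := by
      refine Int.modEq_iff_dvd.mpr ⟨(p ^ 2 + q) * V, ?_⟩
      rw [he]
      linear_combination (-(p ^ 2 + (q : ℤ))) * hUV'
    -- CRT for the new residue
    obtain ⟨c', hc'M, hc'q⟩ := crt_int hcopMq c (e - j)
    -- witness update
    obtain ⟨x2, y2, z2, hxyz2⟩ := lemB hq hqodd c'
    obtain ⟨x', hx'M, hx'q⟩ := crt_int hcopMq x x2
    obtain ⟨y', hy'M, hy'q⟩ := crt_int hcopMq y y2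
    obtain ⟨z', hz'M, hz'q⟩ := crt_int hcopMq z z2
    refine ⟨M * q ^ 2, c', x', y', z', by positivity, ?_, ?_⟩
    · -- combined witness congruence
      have hcast : ((M * q ^ 2 : ℕ) : ℤ) = (M : ℤ) * ((q : ℤ) ^ 2) := by push_cast; ring
      have hdM : (M : ℤ) ∣ (c' - (x' ^ 2 + y' ^ 2 + z' ^ 2)) := by
        have h1 : (x' ^ 2 + y' ^ 2 + z' ^ 2) ≡ (x ^ 2 + y ^ 2 + z ^ 2) [ZMOD (M : ℤ)] :=
          ((hx'M.pow 2).add (hy'M.pow 2)).add (hz'M.pow 2)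
        exact ((h1.trans hxyz).trans hc'M.symm).dvd
      have hdq : ((q : ℤ) ^ 2) ∣ (c' - (x' ^ 2 + y' ^ 2 + z' ^ 2)) := by
        have h1 : (x' ^ 2 + y' ^ 2 + z' ^ 2) ≡ (x2 ^ 2 + y2 ^ 2 + z2 ^ 2)
            [ZMOD ((q : ℤ) ^ 2)] := ((hx'q.pow 2).add (hy'q.pow 2)).add (hz'q.pow 2)
        exact (h1.trans hxyz2).dvd
      have hcop' : IsCoprime (M : ℤ) ((q : ℤ) ^ 2) := by
        have := Nat.isCoprime_iff_coprime.mpr hcopMq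
        push_cast at this
        exact this
      rw [hcast]
      exact Int.modEq_iff_dvd.mpr (hcop'.mul_dvd hdM hdq)
    · rintro t' ht' N hN v d hvd hd
      have hcast : ((M * q ^ 2 : ℕ) : ℤ) = (M : ℤ) * ((q : ℤ) ^ 2) := by push_cast; ring
      rw [hcast] at hN
      rcases List.mem_cons.mp ht' with rfl | ht'
      · -- the new triple
        intro heq
        have hNq : N ≡ c' [ZMOD ((q : ℤ) ^ 2)] := hN.of_mul_left _
        have hnq : sqNorm v ≡ (q : ℤ) [ZMOD ((q : ℤ) ^ 2)] := by
          rw [heq]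
          calc (m : ℤ) * (N + j) - p ^ 2
              ≡ (m : ℤ) * (c' + j) - p ^ 2 [ZMOD ((q : ℤ) ^ 2)] :=
                ((hNq.add_right j).mul_left _).sub_right _
            _ ≡ (m : ℤ) * e - p ^ 2 [ZMOD ((q : ℤ) ^ 2)] := by
                have : c' + j ≡ e [ZMOD ((q : ℤ) ^ 2)] := by
                  have := hc'q.add_right j
                  simpa using this
                exact (this.mul_left _).sub_right _
            _ ≡ (p ^ 2 + q) - p ^ 2 [ZMOD ((q : ℤ) ^ 2)] := hme.sub_right _
            _ = (q : ℤ) := by ring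
        obtain ⟨T, hT⟩ := hnq.dvd
        -- q ∣ sqNorm v, q² ∤ sqNorm v
        have hqdvd : (q : ℤ) ∣ sqNorm v := ⟨1 - q * T, by linear_combination -hT⟩
        have hq2ndvd : ¬ ((q : ℤ) ^ 2 ∣ sqNorm v) := by
          intro hdd
          have h3 : (q : ℤ) = sqNorm v + (q : ℤ) ^ 2 * T := by linarith [hT]
          have h5 : (q : ℤ) ^ 2 ∣ (sqNorm v + (q : ℤ) ^ 2 * T) := dvd_add hdd ⟨T, rfl⟩
          rw [← h3] at h5
          have := Int.le_of_dvd (by positivity) h5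
          nlinarith [hq2]
        have := lemA hq v d hvd hqdvd hq2ndvd
        rw [hd] at this
        apply hnsq
        have hcast2 : ((-(m : ℤ) : ℤ) : ZMod q) = -(((m : ℕ) : ℤ) : ZMod q) := by push_cast; ring
        rwa [hcast2]
      · -- old triples
        exact H t' ht' N ((hN.of_mul_right _).trans hc'M) v d hvd hd

/-- Mallet-Paret–Sell number-theoretic lemma (Proposition 5.1): for every k > 0 and r > 0
there exist infinitely many N ∈ ℕ with (𝒞^k_N − 𝒞^k_N) ∩ 𝓑_r = {0}. -/
theorem stmt10 (k r : ℝ) (hk : 0 < k) (hr : 0 < r) :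
    Set.Infinite {N : ℕ | (annulus k N - annulus k N) ∩ ball3 r = {0}} := by
  classical
  set K : ℕ := ⌈k⌉₊ + 1 with hKdef
  set R : ℕ := ⌈r ^ 2⌉₊ + 1 with hRdef
  set P : ℕ := K + R with hPdef
  have hkK : k ≤ (K : ℝ) := by
    rw [hKdef]; push_cast
    have := Nat.le_ceil k
    linarith
  have hrR : r ^ 2 ≤ (R : ℝ) := by
    rw [hRdef]; push_cast
    have := Nat.le_ceil (r ^ 2)
    linarith
  obtain ⟨M, c, x, y, z, hM, hxyz, H⟩ := lemD (mkL R K P) mkL_pos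
  set s₀ : ℕ := (1 - x).toNat with hs₀
  -- the sequence of witnesses
  set X : ℕ → ℤ := fun s => x + (M : ℤ) * (s₀ + s) with hX
  have hXge : ∀ s : ℕ, 1 ≤ X s := by
    intro s
    have h1 : (1 - x : ℤ) ≤ (s₀ : ℤ) := Int.self_le_toNat _
    have h2 : ((s₀ : ℤ) + s) ≤ (M : ℤ) * ((s₀ : ℤ) + s) := by
      nlinarith [Int.natCast_nonneg s, Int.natCast_nonneg s₀,
        (by exact_mod_cast hM : (1 : ℤ) ≤ M)]
    have h3 : (0 : ℤ) ≤ (s : ℤ) := Int.natCast_nonneg _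
    simp only [hX]
    nlinarith
  have hXmono : ∀ s t : ℕ, s < t → X s < X t := by
    intro s t hst
    simp only [hX]
    have : (s : ℤ) < t := by exact_mod_cast hst
    nlinarith [(by exact_mod_cast hM : (1 : ℤ) ≤ M)]
  have hXmod : ∀ s : ℕ, X s ≡ x [ZMOD (M : ℤ)] := by
    intro s
    refine (Int.modEq_iff_dvd.mpr ⟨((s₀ : ℤ) + s), ?_⟩).symm
    simp only [hX]; ring
  set F : ℕ → ℕ := fun s => ((X s) ^ 2 + y ^ 2 + z ^ 2).toNat with hF
  have hFval : ∀ s : ℕ, ((F s : ℕ) : ℤ) = (X s) ^ 2 + y ^ 2 + z ^ 2 := by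
    intro s
    refine Int.toNat_of_nonneg ?_
    positivity
  have hFmono : StrictMono F := by
    intro s t hst
    have h1 := hXge s
    have h2 := hXmono s t hst
    have key : (X s) ^ 2 + y ^ 2 + z ^ 2 < (X t) ^ 2 + y ^ 2 + z ^ 2 := by nlinarith
    have l1 := hFval s
    have l2 := hFval t
    omega
  have hFmem : ∀ s : ℕ, F s ∈ {N : ℕ | (annulus k N - annulus k N) ∩ ball3 r = {0}} := by
    intro s
    set l₀ : ℤ × ℤ × ℤ := (X s, y, z) with hl₀def
    have hsqn : sqNorm l₀ = (X s) ^ 2 + y ^ 2 + z ^ 2 := by simp [sqNorm, hl₀def]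
    have hNl : ((F s : ℕ) : ℤ) = sqNorm l₀ := by rw [hFval, hsqn]
    have hNc : ((F s : ℕ) : ℤ) ≡ c [ZMOD (M : ℤ)] := by
      rw [hFval]
      exact ((((hXmod s).pow 2).add_right _).add_right _).trans hxyz
    have hl₀mem : l₀ ∈ annulus k (F s) := by
      constructor
      · rw [← hNl]; push_cast; linarith
      · rw [← hNl]; push_cast; linarith
    show (annulus k (F s) - annulus k (F s)) ∩ ball3 r = {0}
    ext u
    simp only [Set.mem_inter_iff, Set.mem_singleton_iff]
    constructor
    · rintro ⟨hu1, hu2⟩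
      by_contra hu0
      obtain ⟨l, hl, l', hl', hsub⟩ := Set.mem_sub.mp hu1
      set d : ℤ × ℤ × ℤ := u with hd
      have hld : l = l' + d := by rw [← hsub]; abel
      -- integer quantities
      set mI : ℤ := sqNorm d with hmI
      set b : ℤ := sqNorm l' with hb
      set a : ℤ := sqNorm l with ha
      set pI : ℤ := dot3 l' d with hpI
      have hab : a = b + 2 * pI + mI := by
        rw [ha, hld, sqNorm_add3, hb, hpI, hmI]
      -- bounds
      have hm1 : 1 ≤ mI := sqNorm_pos3 hu0
      have hmR : mI ≤ (R : ℤ) := by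
        have h1 : (mI : ℝ) ≤ r ^ 2 := hu2
        have : (mI : ℝ) ≤ (R : ℝ) := le_trans h1 hrR
        exact_mod_cast this
      obtain ⟨hl'1, hl'2⟩ := hl'
      obtain ⟨hl1, hl2⟩ := hl
      set j : ℤ := b - (F s : ℤ) with hj
      have hjK : |j| ≤ (K : ℤ) := by
        have h1 : |(j : ℝ)| ≤ k := by
          rw [hj]
          push_cast
          rw [abs_le]
          constructor <;> [linarith [hl'1]; linarith [hl'2]]
        have h2 : ((|j| : ℤ) : ℝ) ≤ (K : ℝ) := by
          rw [Int.cast_abs]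
          linarith [hkK]
        exact_mod_cast h2
      have hpP : |pI| ≤ (P : ℤ) := by
        have h1 : |(a : ℝ) - b| ≤ 2 * k := by
          rw [abs_le]
          constructor <;> linarith
        have habR : (a : ℝ) = (b : ℝ) + 2 * (pI : ℝ) + (mI : ℝ) := by exact_mod_cast hab
        have h2 : |((2 * pI + mI : ℤ) : ℝ)| ≤ 2 * (K : ℝ) := by
          have heq : ((2 * pI + mI : ℤ) : ℝ) = (a : ℝ) - b := by push_cast; linarith [habR]
          rw [heq]
          linarith [h1, hkK]
        have h3 : |2 * pI + mI| ≤ 2 * (K : ℤ) := by exact_mod_cast h2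
        have h4 := abs_le.mp h3
        rw [abs_le, hPdef]
        push_cast
        omega
      -- the perpendicular vector
      set v : ℤ × ℤ × ℤ := cross3 d l' with hv
      have hvd : dot3 v d = 0 := dot3_cross3 d l'
      have hvnorm : sqNorm v = mI * b - (dot3 d l') ^ 2 := by
        rw [hv, sqNorm_cross3, hmI, hb]
      have hdot_comm : dot3 d l' = pI := by
        rw [hpI]
        obtain ⟨d1, d2, d3⟩ := d
        obtain ⟨e1, e2, e3⟩ := l'
        simp only [dot3]; ring
      have hmnat : ((mI.toNat : ℕ) : ℤ) = mI := Int.toNat_of_nonneg (by linarith)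
      have hmem : (mI.toNat, j, pI) ∈ mkL R K P := by
        refine mem_mkL ?_ ?_ hjK hpP
        · omega
        · omega
      have := H (mI.toNat, j, pI) hmem ((F s : ℕ) : ℤ) hNc v d hvd
        (by rw [hmnat, ← hmI])
      apply this
      rw [hvnorm, hdot_comm, hmnat]
      have : ((F s : ℕ) : ℤ) + j = b := by rw [hj]; ring
      rw [this]
    · rintro rfl
      refine ⟨Set.mem_sub.mpr ⟨l₀, hl₀mem, l₀, hl₀mem, sub_self _⟩, ?_⟩
      show ((sqNorm 0 : ℤ) : ℝ) ≤ r ^ 2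
      have : sqNorm (0 : ℤ × ℤ × ℤ) = 0 := by simp [sqNorm, Prod.fst_zero, Prod.snd_zero]
      rw [this]
      push_cast
      positivity
  exact Set.infinite_of_injective_forall_mem hFmono.injective hFmem
end

section
/- Let H be a separable Hilbert space with orthonormal basis (e_n) and A the diagonal operator A e_n = λ_n e_n with 0 < λ_1 ≤ λ_2 ≤ ⋯. For N ∈ ℕ and k > 0 with k ≤ λ_N/2, let 𝓟_{k,N} be the projection onto the modes with λ_j < λ_N − k. Then for every v, ((αA^{−γ} − A)𝓟_{k,N}v, 𝓟_{k,N}v) ≥ (μ̄ + k)‖𝓟_{k,N}v‖²_H, where γ ≥ 0, μ̄ := (λ_{N+1}^{1+γ} − λ_N^{1+γ})/(λ_{N+1}^γ + λ_N^γ), and α := λ_N^{1+γ}λ_{N+1}^γ/(λ_N^γ+λ_{N+1}^γ) + λ_{N+1}^{1+γ}λ_N^γ/(λ_N^γ+λ_{N+1}^γ). -/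
set_option maxHeartbeats 1000000 in
/-- Lower-mode estimate (1.start) from the proof of Theorem 3.2:
((αA^{−γ} − A)𝓟_{k,N}v, 𝓟_{k,N}v) ≥ (μ̄ + k)‖𝓟_{k,N}v‖²_H, where 𝓟_{k,N}
projects onto modes with λ_j < λ_N − k, written in the coordinates of the
orthonormal eigenbasis of the diagonal operator A e_n = λ_n e_n. -/
theorem stmt13 (l : ℕ → ℝ) (hl : 0 < l 0) (hmono : Monotone l)
    (γ k : ℝ) (hγ : 0 ≤ γ) (hk : 0 < k) (N : ℕ) (hkN : k ≤ l N / 2)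
    (μ α : ℝ)
    (hμ : μ = (l (N + 1) ^ (1 + γ) - l N ^ (1 + γ)) / (l (N + 1) ^ γ + l N ^ γ))
    (hα : α = l N ^ (1 + γ) * l (N + 1) ^ γ / (l N ^ γ + l (N + 1) ^ γ)
        + l (N + 1) ^ (1 + γ) * l N ^ γ / (l N ^ γ + l (N + 1) ^ γ))
    (v : ℕ → ℝ) (hv : Summable fun n => l n * v n ^ 2) :
    (∑' n, if l n < l N - k then (α * l n ^ (-γ) - l n) * v n ^ 2 else 0)
      ≥ (μ + k) * ∑' n, if l n < l N - k then v n ^ 2 else 0 := by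
  set a := l N with ha_def
  set b := l (N + 1) with hb_def
  have ha : 0 < a := lt_of_lt_of_le hl (hmono (Nat.zero_le N))
  have hab : a ≤ b := hmono (Nat.le_succ N)
  have hb : 0 < b := lt_of_lt_of_le ha hab
  have haγ : (0:ℝ) < a ^ γ := Real.rpow_pos_of_pos ha γ
  have hbγ : (0:ℝ) < b ^ γ := Real.rpow_pos_of_pos hb γ
  have hS : (0:ℝ) < a ^ γ + b ^ γ := by linarith
  have ha1 : a ^ (1 + γ) = a * a ^ γ := by
    rw [Real.rpow_add ha, Real.rpow_one]
  have hb1 : b ^ (1 + γ) = b * b ^ γ := by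
    rw [Real.rpow_add hb, Real.rpow_one]
  have hμa : μ + a = b ^ γ * (a + b) / (a ^ γ + b ^ γ) := by
    rw [hμ, ha1, hb1]
    field_simp
    ring
  have hα' : α = a ^ γ * b ^ γ * (a + b) / (a ^ γ + b ^ γ) := by
    rw [hα, ha1, hb1]
    field_simp
  have hμpos : 0 ≤ μ := by
    rw [hμ]
    apply div_nonneg _ (by linarith)
    have : a ^ (1+γ) ≤ b ^ (1+γ) :=
      Real.rpow_le_rpow ha.le hab (by linarith)
    linarith
  -- core pointwise inequality
  have core : ∀ n, l n < a - k → μ + k ≤ α * l n ^ (-γ) - l n := by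
    intro n hn
    have hln : 0 < l n := lt_of_lt_of_le hl (hmono (Nat.zero_le n))
    have hlna : l n ≤ a := by linarith
    have hxγ : (0:ℝ) < l n ^ γ := Real.rpow_pos_of_pos hln γ
    have hxa : l n ^ γ ≤ a ^ γ := Real.rpow_le_rpow hln.le hlna hγ
    have hneg : l n ^ (-γ) = (l n ^ γ)⁻¹ := Real.rpow_neg hln.le γ
    have hkey : 1 ≤ a ^ γ * l n ^ (-γ) := by
      rw [hneg, ← div_eq_mul_inv, le_div_iff₀ hxγ, one_mul]
      exact hxa
    have hfac : 0 ≤ b ^ γ * (a + b) / (a ^ γ + b ^ γ) := by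
      apply div_nonneg _ hS.le
      have : 0 ≤ a + b := by linarith
      positivity
    have h1 : μ + a ≤ α * l n ^ (-γ) := by
      rw [hμa, hα']
      have := mul_le_mul_of_nonneg_left hkey hfac
      calc b ^ γ * (a + b) / (a ^ γ + b ^ γ)
          ≤ b ^ γ * (a + b) / (a ^ γ + b ^ γ) * (a ^ γ * l n ^ (-γ)) := by
            nlinarith
        _ = a ^ γ * b ^ γ * (a + b) / (a ^ γ + b ^ γ) * l n ^ (-γ) := by
            ring
    linarith
  -- summability facts
  have hv2 : Summable (fun n => v n ^ 2) := by
    apply Summable.of_nonneg_of_le (fun n => sq_nonneg _)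
      (fun n => ?_) (hv.div_const (l 0))
    have hln : l 0 ≤ l n := hmono (Nat.zero_le n)
    rw [le_div_iff₀ hl]
    nlinarith [sq_nonneg (v n)]
  have hsumR : Summable (fun n => if l n < a - k then (μ + k) * v n ^ 2 else 0) := by
    apply Summable.of_nonneg_of_le (fun n => ?_) (fun n => ?_)
      (hv2.mul_left (μ + k))
    · by_cases h : l n < a - k <;> simp [h] <;> positivity
    · by_cases h : l n < a - k <;> simp [h] <;> positivity
  have hsumL : Summable (fun n => if l n < a - k then (α * l n ^ (-γ) - l n) * v n ^ 2 else 0) := by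
    have hα0 : 0 ≤ α := by
      rw [hα']
      apply div_nonneg _ hS.le
      positivity
    apply Summable.of_nonneg_of_le (fun n => ?_) (fun n => ?_)
      (hv2.mul_left (α * l 0 ^ (-γ)))
    · by_cases h : l n < a - k
      · simp only [h, if_true]
        have := core n h
        nlinarith [sq_nonneg (v n), hμpos, hk]
      · simp [h]
    · have hl0γ : (0:ℝ) ≤ α * l 0 ^ (-γ) * v n ^ 2 := by positivity
      by_cases h : l n < a - k
      · simp only [h, if_true]
        have hln : 0 < l n := lt_of_lt_of_le hl (hmono (Nat.zero_le n))
        have h2 : l n ^ (-γ) ≤ l 0 ^ (-γ) := by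
          rw [Real.rpow_neg hln.le, Real.rpow_neg hl.le]
          apply inv_anti₀ (Real.rpow_pos_of_pos hl γ)
          exact Real.rpow_le_rpow hl.le (hmono (Nat.zero_le n)) hγ
        nlinarith [sq_nonneg (v n), hln.le,
          mul_le_mul_of_nonneg_left h2 hα0]
      · simpa [h] using hl0γ
  -- conclude
  have hrw : (μ + k) * ∑' n, (if l n < a - k then v n ^ 2 else 0)
      = ∑' n, (if l n < a - k then (μ + k) * v n ^ 2 else 0) := by
    rw [← tsum_mul_left]
    congr 1
    funext n
    by_cases h : l n < a - k <;> simp [h]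
  rw [ge_iff_le, hrw]
  refine Summable.tsum_le_tsum (fun n => ?_) hsumR hsumL
  by_cases h : l n < a - k
  · simp only [h, if_true]
    have := core n h
    nlinarith [sq_nonneg (v n)]
  · simp [h]
end
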